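/- Let a = [[2,1],[3,2]] and, for s ≥ 10, b = [[2e^{−s}, 3e^{s}],[e^{−s}, 2e^{s}]] in SL₂(ℝ). Then a and b are hyperbolic elements whose translation axes in the hyperbolic plane are disjoint, and τ_b − τ_a ≥ 2d + 1 where d is the distance between the axes and τ denotes translation length. -/

import Mathlib

open Matrix UpperHalfPlane
open scoped MatrixGroups

/-- The translation length of `g ∈ SL(2,ℝ)` acting on the hyperbolic plane:
the infimum of the displacement `dist (g • z) z`. -/
noncomputable def transLen (g : SL(2, ℝ)) : ℝ := ⨅ z : ℍ, dist (g • z) z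

/-- The translation axis of `g`: the set of points realizing the minimal displacement. -/
noncomputable def axisSet (g : SL(2, ℝ)) : Set ℍ := {z : ℍ | dist (g • z) z = transLen g}

/-- The distance between the translation axes of `a` and `b`. -/
noncomputable def axisDist (a b : SL(2, ℝ)) : ℝ :=
  ⨅ (x : axisSet a) (y : axisSet b), dist (x : ℍ) (y : ℍ)

/-- `g` is a hyperbolic isometry iff `|tr g| > 2`. -/
def IsHyperbolic (g : SL(2, ℝ)) : Prop := 2 < |Matrix.trace (g : Matrix (Fin 2) (Fin 2) ℝ)|

/-- Determinant of two vectors in the plane. -/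
def det2 (u v : Fin 2 → ℝ) : ℝ := u 0 * v 1 - u 1 * v 0

/-- Positive cyclic orientation of three points of the circle `ℙ¹(ℝ) = ∂ℍ`, represented by
nonzero vectors of `ℝ²`; this is independent of the choice of representatives. -/
def posOrient (u v w : Fin 2 → ℝ) : Prop := 0 < det2 u v * det2 v w * det2 w u

/-- Four points of the circle `ℙ¹(ℝ)`, given by vector representatives, are cyclically
ordered in the order `(u, v, w, z)` (for one of the two orientations). -/
def cyc4 (u v w z : Fin 2 → ℝ) : Prop :=
  (posOrient u v w ∧ posOrient u w z) ∨ (posOrient z w v ∧ posOrient z v u)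

/-- Two hyperbolic elements `a, b` are *in the same direction*: their repelling/attracting
fixed points on the boundary circle (identified with the eigenlines of the corresponding
eigenvectors) are cyclically ordered as `(x_a⁻, x_a⁺, x_b⁺, x_b⁻)`. -/
def SameDirection (a b : SL(2, ℝ)) : Prop :=
  ∃ (uaP uaM ubP ubM : Fin 2 → ℝ) (αa βa αb βb : ℝ),
    uaP ≠ 0 ∧ uaM ≠ 0 ∧ ubP ≠ 0 ∧ ubM ≠ 0 ∧
    (a : Matrix (Fin 2) (Fin 2) ℝ) *ᵥ uaP = αa • uaP ∧ 1 < |αa| ∧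
    (a : Matrix (Fin 2) (Fin 2) ℝ) *ᵥ uaM = βa • uaM ∧ |βa| < 1 ∧
    (b : Matrix (Fin 2) (Fin 2) ℝ) *ᵥ ubP = αb • ubP ∧ 1 < |αb| ∧
    (b : Matrix (Fin 2) (Fin 2) ℝ) *ᵥ ubM = βb • ubM ∧ |βb| < 1 ∧
    cyc4 uaM uaP ubP ubM


private lemma coshDist_formula (g : SL(2, ℝ)) (A B C D : ℝ)
    (hg : ((g : Matrix (Fin 2) (Fin 2) ℝ)) = !![A, B; C, D]) (z : ℍ) :
    Real.cosh (dist (g • z) z) =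
      ((A + D) ^ 2 / 2 - 1) +
        (C * (z.re ^ 2 + z.im ^ 2) + (D - A) * z.re - B) ^ 2 / (2 * z.im ^ 2) := by
  have hdet : A * D - B * C = 1 := by
    have h := g.property
    rw [hg, Matrix.det_fin_two_of] at h
    linarith
  have hy : 0 < z.im := z.im_pos
  have hco : ((g • z : ℍ) : ℂ) = ((A : ℂ) * (z : ℂ) + B) / ((C : ℂ) * (z : ℂ) + D) := by
    rw [UpperHalfPlane.specialLinearGroup_apply, UpperHalfPlane.coe_mk]
    simp [hg]
  have hden : ((C : ℂ) * (z : ℂ) + D) ≠ 0 := by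
    intro h
    have h1 : C * z.im = 0 := by
      have := congrArg Complex.im h
      simpa using this
    have hC : C = 0 := by
      rcases mul_eq_zero.mp h1 with h' | h'
      · exact h'
      · exact absurd h' hy.ne'
    have h2 : C * z.re + D = 0 := by
      have := congrArg Complex.re h
      simpa using this
    rw [hC] at h2 hdet
    simp at h2
    rw [h2] at hdet
    simp at hdet
  have hS : 0 < Complex.normSq ((C : ℂ) * (z : ℂ) + D) := Complex.normSq_pos.mpr hden
  have him : (g • z).im = z.im / Complex.normSq ((C : ℂ) * (z : ℂ) + D) := by
    rw [← UpperHalfPlane.coe_im, hco, Complex.div_im, div_sub_div_same, Complex.normSq_apply]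
    simp only [Complex.add_re, Complex.add_im, Complex.mul_re, Complex.mul_im,
      Complex.ofReal_re, Complex.ofReal_im, UpperHalfPlane.coe_re, UpperHalfPlane.coe_im]
    congr 1
    linear_combination z.im * hdet
  have hdiff : ((g • z : ℍ) : ℂ) - (z : ℂ) =
      (-(C : ℂ) * (z : ℂ) ^ 2 + ((A : ℂ) - D) * (z : ℂ) + B) / ((C : ℂ) * (z : ℂ) + D) := by
    rw [hco]
    rw [eq_div_iff hden, sub_mul, div_mul_cancel₀ _ hden]
    ring
  have hnum : Complex.normSq (-(C : ℂ) * (z : ℂ) ^ 2 + ((A : ℂ) - D) * (z : ℂ) + B) =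
      (C * (z.re ^ 2 + z.im ^ 2) + (D - A) * z.re - B) ^ 2 + ((A + D) ^ 2 - 4) * z.im ^ 2 := by
    rw [Complex.normSq_apply]
    simp only [Complex.add_re, Complex.add_im, Complex.mul_re, Complex.mul_im, Complex.sub_re,
      Complex.sub_im, Complex.ofReal_re, Complex.ofReal_im, Complex.neg_re, Complex.neg_im,
      UpperHalfPlane.coe_re, UpperHalfPlane.coe_im, pow_two]
    linear_combination (-4 * z.im * z.im) * hdet
  rw [UpperHalfPlane.cosh_dist, Complex.dist_eq, Complex.sq_norm, hdiff, Complex.normSq_div,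
    hnum, him]
  field_simp
  ring

private lemma master (g : SL(2, ℝ)) (A B C D : ℝ)
    (hg : ((g : Matrix (Fin 2) (Fin 2) ℝ)) = !![A, B; C, D]) (z₀ : ℍ)
    (h₀ : C * (z₀.re ^ 2 + z₀.im ^ 2) + (D - A) * z₀.re - B = 0) :
    transLen g = dist (g • z₀) z₀ ∧
      Real.cosh (transLen g) = (A + D) ^ 2 / 2 - 1 ∧
      axisSet g = {z : ℍ | C * (z.re ^ 2 + z.im ^ 2) + (D - A) * z.re - B = 0} := by
  have h0 : Real.cosh (dist (g • z₀) z₀) = (A + D) ^ 2 / 2 - 1 := by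
    rw [coshDist_formula g A B C D hg z₀, h₀]
    simp
  have hmin : ∀ z : ℍ, dist (g • z₀) z₀ ≤ dist (g • z) z := by
    intro z
    have h1 : Real.cosh (dist (g • z₀) z₀) ≤ Real.cosh (dist (g • z) z) := by
      rw [h0, coshDist_formula g A B C D hg z]
      have : 0 ≤ (C * (z.re ^ 2 + z.im ^ 2) + (D - A) * z.re - B) ^ 2 / (2 * z.im ^ 2) := by
        positivity
      linarith
    have h2 := Real.cosh_le_cosh.mp h1
    rwa [abs_of_nonneg dist_nonneg, abs_of_nonneg dist_nonneg] at h2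
  have htl : transLen g = dist (g • z₀) z₀ := by
    refine le_antisymm ?_ ?_
    · exact ciInf_le ⟨0, by rintro r ⟨z, rfl⟩; exact dist_nonneg⟩ z₀
    · exact le_ciInf hmin
  refine ⟨htl, by rw [htl]; exact h0, ?_⟩
  ext z
  simp only [axisSet, Set.mem_setOf_eq, htl]
  constructor
  · intro h
    have hc : Real.cosh (dist (g • z) z) = Real.cosh (dist (g • z₀) z₀) := by rw [h]
    rw [h0, coshDist_formula g A B C D hg z] at hc
    have hy : 0 < z.im := z.im_pos
    have h2 : (C * (z.re ^ 2 + z.im ^ 2) + (D - A) * z.re - B) ^ 2 / (2 * z.im ^ 2) = 0 := by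
      linarith
    field_simp at h2
    exact (pow_eq_zero_iff two_ne_zero).mp (by linarith)
  · intro h
    have hc : Real.cosh (dist (g • z) z) = Real.cosh (dist (g • z₀) z₀) := by
      rw [h0, coshDist_formula g A B C D hg z, h]
      simp
    have h1 := Real.cosh_le_cosh.mp hc.le
    have h2 := Real.cosh_le_cosh.mp hc.ge
    rw [abs_of_nonneg dist_nonneg, abs_of_nonneg dist_nonneg] at h1 h2
    exact le_antisymm h1 h2

private noncomputable def ptP : ℍ :=
  ⟨⟨0, (Real.sqrt 3)⁻¹⟩, by
    show (0:ℝ) < (Real.sqrt 3)⁻¹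
    have : (0:ℝ) < Real.sqrt 3 := Real.sqrt_pos.mpr (by norm_num)
    positivity⟩

private noncomputable def ptQ : ℍ :=
  ⟨⟨3/2, Real.sqrt 3 / 2⟩, by
    show (0:ℝ) < Real.sqrt 3 / 2
    have : (0:ℝ) < Real.sqrt 3 := Real.sqrt_pos.mpr (by norm_num)
    positivity⟩

private lemma ptP_re : ptP.re = 0 := rfl
private lemma ptP_im : ptP.im = (Real.sqrt 3)⁻¹ := rfl
private lemma ptQ_re : ptQ.re = 3/2 := rfl
private lemma ptQ_im : ptQ.im = Real.sqrt 3 / 2 := rfl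

set_option maxHeartbeats 1000000 in
/-- For `s ≥ 10`, the matrices `a = [[2,1],[3,2]]` and `b = [[2e⁻ˢ,3eˢ],[e⁻ˢ,2eˢ]]` are
hyperbolic elements of `SL(2,ℝ)` with disjoint translation axes, and
`τ_b − τ_a ≥ 2d + 1` where `d` is the distance between the axes. -/
theorem explicit_pair_properties (s : ℝ) (hs : 10 ≤ s) (a b : SL(2, ℝ))
    (hA : (a : Matrix (Fin 2) (Fin 2) ℝ) = !![2, 1; 3, 2])
    (hB : (b : Matrix (Fin 2) (Fin 2) ℝ) =
      !![2 * Real.exp (-s), 3 * Real.exp s; Real.exp (-s), 2 * Real.exp s]) :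
    IsHyperbolic a ∧ IsHyperbolic b ∧ axisSet a ∩ axisSet b = ∅ ∧
      2 * axisDist a b + 1 ≤ transLen b - transLen a := by
  have hsq3 : (0:ℝ) < Real.sqrt 3 := Real.sqrt_pos.mpr (by norm_num)
  have hsq3' : Real.sqrt 3 ^ 2 = 3 := Real.sq_sqrt (by norm_num)
  set u := Real.exp s with hu_def
  set v := Real.exp (-s) with hv_def
  have hupos : 0 < u := Real.exp_pos s
  have hvpos : 0 < v := Real.exp_pos _
  have huv : u * v = 1 := by rw [hu_def, hv_def, ← Real.exp_add]; simp
  have hue : Real.exp 1 ≤ u := Real.exp_le_exp.mpr (by linarith)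
  have he1 : (2.7182818283 : ℝ) < Real.exp 1 := Real.exp_one_gt_d9
  have hu1 : (2:ℝ) < u := by linarith
  have hv1 : v < 1 := by nlinarith
  -- axis data for a
  have hp0 : 3 * (ptP.re ^ 2 + ptP.im ^ 2) + ((2:ℝ) - 2) * ptP.re - 1 = 0 := by
    rw [ptP_re, ptP_im, inv_pow, hsq3']
    norm_num
  obtain ⟨htlA, hcoshA, haxA⟩ := master a 2 1 3 2 hA ptP hp0
  -- axis data for b
  have hqim2 : ptQ.im ^ 2 = 3 / 4 := by
    rw [ptQ_im, div_pow, hsq3']; norm_num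
  have hq0 : v * (ptQ.re ^ 2 + ptQ.im ^ 2) + (2 * u - 2 * v) * ptQ.re - 3 * u = 0 := by
    rw [ptQ_re, hqim2]; ring
  obtain ⟨htlB, hcoshB, haxB⟩ := master b (2*v) (3*u) v (2*u) hB ptQ hq0
  -- hyperbolicity
  have hyper_a : IsHyperbolic a := by
    unfold _root_.IsHyperbolic
    rw [hA, Matrix.trace_fin_two_of]
    norm_num
  have hyper_b : IsHyperbolic b := by
    unfold _root_.IsHyperbolic
    rw [hB, Matrix.trace_fin_two_of]
    rw [abs_of_pos (by positivity)]
    linarith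
  -- disjointness
  have hdisj : axisSet a ∩ axisSet b = ∅ := by
    rw [Set.eq_empty_iff_forall_notMem]
    rintro z ⟨hz1, hz2⟩
    rw [haxA, Set.mem_setOf_eq] at hz1
    rw [haxB, Set.mem_setOf_eq] at hz2
    have hy : 0 < z.im := z.im_pos
    have hx1 : z.re ^ 2 + z.im ^ 2 = 1/3 := by linarith
    have hxlt : z.re < 1 := by nlinarith [sq_nonneg (z.re - 1), pow_pos hy 2]
    rw [hx1] at hz2
    have h2uv : 0 < 2*u - 2*v := by linarith
    have hprod : 0 < (2*u - 2*v) * (1 - z.re) := mul_pos h2uv (by linarith)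
    nlinarith [hprod]
  -- numeric bounds on translation lengths
  have hA7 : Real.cosh (transLen a) = 7 := by rw [hcoshA]; norm_num
  have hexp3 : Real.exp 3 = Real.exp 1 ^ 3 := by
    rw [← Real.exp_nat_mul]; norm_num
  have htauA : transLen a ≤ 3 := by
    have h1 : Real.cosh (transLen a) ≤ Real.cosh 3 := by
      rw [hA7, Real.cosh_eq]
      have hc : (2.7182818283:ℝ) ^ 3 ≤ Real.exp 1 ^ 3 :=
        pow_le_pow_left₀ (by norm_num) he1.le 3
      have hc2 : (14:ℝ) ≤ (2.7182818283:ℝ) ^ 3 := by norm_num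
      have hc3 : (14:ℝ) ≤ Real.exp 3 := by rw [hexp3]; linarith
      linarith [Real.exp_pos (-(3:ℝ))]
    have h2 := Real.cosh_le_cosh.mp h1
    rw [abs_of_nonneg (htlA ▸ dist_nonneg), abs_of_pos (by norm_num : (0:ℝ) < 3)] at h2
    exact h2
  have hexp2s : Real.exp (2*s) = u ^ 2 := by
    rw [two_mul, Real.exp_add, hu_def]; ring
  have htauB : 8 ≤ transLen b := by
    have h1 : Real.cosh (8:ℝ) ≤ Real.cosh (transLen b) := by
      rw [hcoshB, Real.cosh_eq]
      have h2 : Real.exp (8:ℝ) ≤ Real.exp (2*s) := Real.exp_le_exp.mpr (by linarith)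
      have h3 : Real.exp (-(8:ℝ)) ≤ 1 := by
        rw [show (1:ℝ) = Real.exp 0 by simp]
        exact Real.exp_le_exp.mpr (by norm_num)
      rw [hexp2s] at h2
      have h4 : u ^ 2 + 1 ≤ (2 * v + 2 * u) ^ 2 - 2 := by
        nlinarith [mul_pos hupos hvpos, sq_nonneg v]
      linarith
    have hnn : 0 ≤ transLen b := by rw [htlB]; exact dist_nonneg
    have h2 := Real.cosh_le_cosh.mp h1
    rw [abs_of_nonneg hnn] at h2
    simpa using h2
  -- distance between the chosen axis points
  have hpq : Real.cosh (dist ptP ptQ) = 10/3 := by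
    rw [UpperHalfPlane.cosh_dist, Complex.dist_eq, Complex.sq_norm, Complex.normSq_apply]
    have hre : ((ptP : ℂ) - (ptQ : ℂ)).re = 0 - 3/2 := by
      rw [Complex.sub_re, UpperHalfPlane.coe_re, UpperHalfPlane.coe_re, ptP_re, ptQ_re]
    have him : ((ptP : ℂ) - (ptQ : ℂ)).im = (Real.sqrt 3)⁻¹ - Real.sqrt 3 / 2 := by
      rw [Complex.sub_im, UpperHalfPlane.coe_im, UpperHalfPlane.coe_im, ptP_im, ptQ_im]
    rw [hre, him, ptP_im, ptQ_im]
    have hne : Real.sqrt 3 ≠ 0 := ne_of_gt hsq3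
    field_simp
    nlinarith [hsq3', hsq3]
  have hdpq : dist ptP ptQ ≤ 2 := by
    have h1 : Real.cosh (dist ptP ptQ) ≤ Real.cosh 2 := by
      rw [hpq, Real.cosh_eq]
      have hexp2 : Real.exp 2 = Real.exp 1 ^ 2 := by rw [← Real.exp_nat_mul]; norm_num
      have hc : (2.7182818283:ℝ) ^ 2 ≤ Real.exp 1 ^ 2 :=
        pow_le_pow_left₀ (by norm_num) he1.le 2
      have hc2 : (7:ℝ) ≤ (2.7182818283:ℝ) ^ 2 := by norm_num
      have hc3 : (7:ℝ) ≤ Real.exp 2 := by rw [hexp2]; linarith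
      linarith [Real.exp_pos (-(2:ℝ))]
    have h2 := Real.cosh_le_cosh.mp h1
    rw [abs_of_nonneg dist_nonneg, abs_of_pos (by norm_num : (0:ℝ) < 2)] at h2
    exact h2
  -- axisDist bound
  have hpmem : ptP ∈ axisSet a := by rw [haxA]; exact hp0
  have hqmem : ptQ ∈ axisSet b := by rw [haxB]; exact hq0
  have hdax : axisDist a b ≤ dist ptP ptQ := by
    have hbdd1 : BddBelow (Set.range fun y : axisSet b => dist (ptP : ℍ) (y : ℍ)) := by
      refine ⟨0, ?_⟩
      rintro r ⟨y, rfl⟩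
      exact dist_nonneg
    have h1 : (⨅ (y : axisSet b), dist (ptP : ℍ) (y : ℍ)) ≤ dist ptP ptQ :=
      ciInf_le hbdd1 (⟨ptQ, hqmem⟩ : axisSet b)
    have hbdd2 : BddBelow (Set.range fun x : axisSet a =>
        ⨅ (y : axisSet b), dist (x : ℍ) (y : ℍ)) := by
      refine ⟨0, ?_⟩
      rintro r ⟨x, rfl⟩
      exact Real.iInf_nonneg fun _ => dist_nonneg
    have h2 : axisDist a b ≤ ⨅ (y : axisSet b), dist (ptP : ℍ) (y : ℍ) :=
      ciInf_le hbdd2 (⟨ptP, hpmem⟩ : axisSet a)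
    exact h2.trans h1
  exact ⟨hyper_a, hyper_b, hdisj, by linarith⟩
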